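/- If F and G are orderable groups, then the free product F * G is orderable. (Vinogradov's theorem, binary case.) -/

import Mathlib

set_option maxHeartbeats 1000000
set_option linter.unusedSectionVars false

attribute [local instance] Classical.propDecidable

namespace VinAux

open MonoidAlgebra Polynomial Finset

variable {Γ : Type*} [Group Γ] [LinearOrder Γ]

/-- Positivity in the group ring: the coefficient at the maximal support element is positive. -/
def posR (x : MonoidAlgebra ℤ Γ) : Prop :=
  ∃ h : x.coeff.support.Nonempty, 0 < x.coeff (x.coeff.support.max' h)

theorem posR_of {x : MonoidAlgebra ℤ Γ} (m : Γ) (hm : 0 < x.coeff m)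
    (hbd : ∀ y ∈ x.coeff.support, y ≤ m) : posR x := by
  have hmem : m ∈ x.coeff.support := Finsupp.mem_support_iff.2 hm.ne'
  have hne : x.coeff.support.Nonempty := ⟨m, hmem⟩
  have : x.coeff.support.max' hne = m :=
    le_antisymm (Finset.max'_le _ _ _ hbd) (Finset.le_max' _ _ hmem)
  exact ⟨hne, this ▸ hm⟩

theorem posR_ne_zero {x : MonoidAlgebra ℤ Γ} (h : posR x) : x ≠ 0 := by
  obtain ⟨hne, hpos⟩ := h
  intro h0
  rw [h0] at hne
  simp at hne

theorem posR_neg_elim {x : MonoidAlgebra ℤ Γ} (h : posR x) (h' : posR (-x)) : False := by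
  obtain ⟨hne, hpos⟩ := h
  obtain ⟨hne', hpos'⟩ := h'
  have hs : (-x).coeff.support = x.coeff.support := Finsupp.support_neg x.coeff
  have : (-x).coeff.support.max' hne' = x.coeff.support.max' hne := by
    congr 1
  rw [this] at hpos'
  have : (-x).coeff (x.coeff.support.max' hne) = -(x.coeff (x.coeff.support.max' hne)) := rfl
  omega

theorem posR_tri {x : MonoidAlgebra ℤ Γ} (h : x ≠ 0) : posR x ∨ posR (-x) := by
  have hne : x.coeff.support.Nonempty := Finsupp.support_nonempty_iff.2 (by simpa using h)
  set m := x.coeff.support.max' hne with hm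
  have hmem : m ∈ x.coeff.support := Finset.max'_mem _ _
  have hval : x.coeff m ≠ 0 := Finsupp.mem_support_iff.1 hmem
  rcases lt_or_gt_of_ne hval with hlt | hgt
  · right
    refine posR_of m (by rw [MonoidAlgebra.coeff_neg, Finsupp.neg_apply]; omega) ?_
    intro y hy
    rw [MonoidAlgebra.coeff_neg, Finsupp.support_neg] at hy
    exact Finset.le_max' _ _ hy
  · exact Or.inl ⟨hne, hgt⟩

theorem posR_add {x y : MonoidAlgebra ℤ Γ} (hx : posR x) (hy : posR y) : posR (x + y) := by
  obtain ⟨hnex, hpx⟩ := hx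
  obtain ⟨hney, hpy⟩ := hy
  set a := x.coeff.support.max' hnex with ha
  set b := y.coeff.support.max' hney with hb
  have hbdx : ∀ z ∈ x.coeff.support, z ≤ a := fun z hz => Finset.le_max' _ _ hz
  have hbdy : ∀ z ∈ y.coeff.support, z ≤ b := fun z hz => Finset.le_max' _ _ hz
  have hxlt : ∀ z, a < z → x.coeff z = 0 := fun z hz => by
    by_contra h; exact absurd (hbdx z (Finsupp.mem_support_iff.2 h)) (not_le.2 hz)
  have hylt : ∀ z, b < z → y.coeff z = 0 := fun z hz => by
    by_contra h; exact absurd (hbdy z (Finsupp.mem_support_iff.2 h)) (not_le.2 hz)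
  have hadd : ∀ z, (x + y).coeff z = x.coeff z + y.coeff z := fun z => rfl
  have hbd : ∀ z ∈ (x + y).coeff.support, z ≤ a ⊔ b := by
    intro z hz
    have := Finsupp.support_add (by simpa [MonoidAlgebra.coeff_add] using hz)
    rcases Finset.mem_union.1 this with h | h
    · exact le_trans (hbdx z h) le_sup_left
    · exact le_trans (hbdy z h) le_sup_right
  rcases lt_trichotomy a b with h | h | h
  · refine posR_of b ?_ (by simpa [sup_eq_right.2 h.le] using hbd)
    rw [hadd, hxlt b h]
    simpa using hpy
  · refine posR_of b ?_ (by simpa [sup_eq_right.2 h.le] using hbd)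
    rw [hadd, ← h]
    rw [← h] at hpy
    omega
  · refine posR_of a ?_ (by simpa [sup_eq_left.2 h.le] using hbd)
    rw [hadd, hylt a h]
    simpa using hpx


theorem posR_single (u : Γ) : posR (MonoidAlgebra.single u (1 : ℤ)) := by
  refine posR_of u ?_ ?_
  · simp
  · intro y hy
    have := Finsupp.support_single_subset hy
    simp only [Finset.mem_singleton] at this
    exact this.le

def signedR (x : MonoidAlgebra ℤ Γ) : Prop := posR x ∨ posR (-x)

theorem signedR_ne_zero {x : MonoidAlgebra ℤ Γ} (h : signedR x) : x ≠ 0 := by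
  rcases h with h | h
  · exact posR_ne_zero h
  · intro h0; rw [h0] at h; simpa using posR_ne_zero h
theorem signedR_sub_one {u : Γ} (hu : u ≠ 1) :
    signedR (MonoidAlgebra.single u (1 : ℤ) - 1) := by
  rw [MonoidAlgebra.one_def]
  rcases lt_or_gt_of_ne hu with h | h
  · right
    rw [neg_sub]
    refine posR_of 1 ?_ ?_
    · rw [MonoidAlgebra.coeff_sub, Finsupp.sub_apply]
      simp [MonoidAlgebra.coeff_single, Finsupp.single_apply, hu, Ne.symm hu]
    · intro y hy
      have := Finsupp.support_sub hy
      rcases Finset.mem_union.1 this with h' | h'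
      · have := Finsupp.support_single_subset h'
        simp only [Finset.mem_singleton] at this
        exact this.le
      · have := Finsupp.support_single_subset h'
        simp only [Finset.mem_singleton] at this
        exact this ▸ h.le
  · left
    refine posR_of u ?_ ?_
    · rw [MonoidAlgebra.coeff_sub, Finsupp.sub_apply]
      simp [MonoidAlgebra.coeff_single, Finsupp.single_apply, hu, Ne.symm hu]
    · intro y hy
      have := Finsupp.support_sub hy
      rcases Finset.mem_union.1 this with h' | h'
      · have := Finsupp.support_single_subset h'
        simp only [Finset.mem_singleton] at this
        exact this.le
      · have := Finsupp.support_single_subset h'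
        simp only [Finset.mem_singleton] at this
        exact this ▸ h.le


section Cov

variable (hc : ∀ a b c : Γ, a < b → a * c < b * c) (hc' : ∀ a b c : Γ, a < b → c * a < c * b)

include hc hc'

theorem posR_mul {x y : MonoidAlgebra ℤ Γ} (hx : posR x) (hy : posR y) : posR (x * y) := by
  obtain ⟨hnex, hpx⟩ := hx
  obtain ⟨hney, hpy⟩ := hy
  set a := x.coeff.support.max' hnex with ha
  set b := y.coeff.support.max' hney with hb
  have hbdx : ∀ z ∈ x.coeff.support, z ≤ a := fun z hz => Finset.le_max' _ _ hz
  have hbdy : ∀ z ∈ y.coeff.support, z ≤ b := fun z hz => Finset.le_max' _ _ hz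
  have hcle : ∀ u v w : Γ, u ≤ v → w * u ≤ w * v := by
    intro u v w h
    rcases eq_or_lt_of_le h with rfl | h
    · exact le_rfl
    · exact (hc' u v w h).le
  have key : ∀ u v : Γ, u ∈ x.coeff.support → v ∈ y.coeff.support → u * v = a * b → u = a ∧ v = b := by
    intro u v hu hv huv
    by_cases hua : u = a
    · subst hua
      refine ⟨rfl, ?_⟩
      by_contra hvb
      have : v < b := lt_of_le_of_ne (hbdy v hv) hvb
      exact absurd huv (ne_of_lt (hc' v b a this))
    · have h1 : u < a := lt_of_le_of_ne (hbdx u hu) hua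
      have : u * v < a * b := lt_of_lt_of_le (hc u a v h1) (hcle v b a (hbdy v hv))
      exact absurd huv (ne_of_lt this)
  -- value at a * b
  have hval : (x * y).coeff (a * b) = x.coeff a * y.coeff b := by
    rw [MonoidAlgebra.coeff_mul]
    rw [Finsupp.sum]
    rw [Finset.sum_eq_single a]
    · rw [Finsupp.sum, Finset.sum_eq_single b]
      · simp
      · intro v hv hvb
        rw [if_neg]
        intro h
        exact hvb (key a v (Finset.max'_mem _ _) hv h).2
      · intro hb'
        simp [Finsupp.notMem_support_iff.1 hb']
    · intro u hu hua
      rw [Finsupp.sum, Finset.sum_eq_zero]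
      intro v hv
      rw [if_neg]
      intro h
      exact hua (key u v hu hv h).1
    · intro ha'
      exact absurd (Finset.max'_mem _ _) ha'
  refine posR_of (a * b) ?_ ?_
  · rw [hval]; exact mul_pos hpx hpy
  · intro z hz
    have := MonoidAlgebra.support_coeff_mul_subset x y hz
    obtain ⟨u, hu, v, hv, rfl⟩ := Finset.mem_mul.1 this
    calc u * v ≤ u * b := hcle v b u (hbdy v hv)
    _ ≤ a * b := by
        rcases eq_or_lt_of_le (hbdx u hu) with rfl | h
        · exact le_rfl
        · exact (hc u a b h).le

theorem signedR_mul {x y : MonoidAlgebra ℤ Γ} (hx : signedR x) (hy : signedR y) :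
    signedR (x * y) := by
  rcases hx with hx | hx <;> rcases hy with hy | hy
  · exact Or.inl (posR_mul hc hc' hx hy)
  · right
    have := posR_mul hc hc' hx hy
    rwa [mul_neg] at this
  · right
    have := posR_mul hc hc' hx hy
    rwa [neg_mul] at this
  · left
    have := posR_mul hc hc' hx hy
    rwa [neg_mul_neg] at this


end Cov

theorem single_mul_eq_zero_iff (u : Γ) (x : MonoidAlgebra ℤ Γ) :
    MonoidAlgebra.single u (1 : ℤ) * x = 0 ↔ x = 0 := by
  constructor
  · intro h
    have := congrArg (fun y => MonoidAlgebra.single u⁻¹ (1 : ℤ) * y) h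
    simpa [← mul_assoc, MonoidAlgebra.single_mul_single, ← MonoidAlgebra.one_def] using this
  · intro h; rw [h, mul_zero]

theorem mul_single_eq_zero_iff (u : Γ) (x : MonoidAlgebra ℤ Γ) :
    x * MonoidAlgebra.single u (1 : ℤ) = 0 ↔ x = 0 := by
  constructor
  · intro h
    have := congrArg (fun y => y * MonoidAlgebra.single u⁻¹ (1 : ℤ)) h
    simpa [mul_assoc, MonoidAlgebra.single_mul_single, ← MonoidAlgebra.one_def] using this
  · intro h; rw [h, zero_mul]



/-! ### Lists of ring elements: first-nonzero positivity -/

def posL : List (MonoidAlgebra ℤ Γ) → Prop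
  | [] => False
  | x :: l => (x ≠ 0 ∧ posR x) ∨ (x = 0 ∧ posL l)

theorem posL_exists_ne {l : List (MonoidAlgebra ℤ Γ)} (h : posL l) : ∃ x ∈ l, x ≠ 0 := by
  induction l with
  | nil => exact h.elim
  | cons x l ih =>
    rcases h with ⟨hx, _⟩ | ⟨_, hl⟩
    · exact ⟨x, List.mem_cons_self, hx⟩
    · obtain ⟨y, hy, hy'⟩ := ih hl
      exact ⟨y, List.mem_cons_of_mem _ hy, hy'⟩

theorem posL_add : ∀ {l l' : List (MonoidAlgebra ℤ Γ)}, posL l → posL l' →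
    posL (List.zipWith (· + ·) l l')
  | [], _, h, _ => h.elim
  | _ :: _, [], _, h' => h'.elim
  | x :: l, x' :: l', h, h' => by
    rcases h with ⟨hx, hpx⟩ | ⟨hx, hl⟩ <;> rcases h' with ⟨hx', hpx'⟩ | ⟨hx', hl'⟩
    · exact Or.inl ⟨posR_ne_zero (posR_add hpx hpx'), posR_add hpx hpx'⟩
    · subst hx'
      exact Or.inl ⟨by simpa using hx, by simpa using hpx⟩
    · subst hx
      exact Or.inl ⟨by simpa using hx', by simpa using hpx'⟩
    · subst hx; subst hx'
      exact Or.inr ⟨by simp, posL_add hl hl'⟩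

theorem posL_not_neg : ∀ {l : List (MonoidAlgebra ℤ Γ)}, posL l → posL (l.map Neg.neg) → False
  | [], h, _ => h.elim
  | x :: l, h, h' => by
    rcases h with ⟨hx, hpx⟩ | ⟨hx, hl⟩
    · rcases h' with ⟨_, hpx'⟩ | ⟨hx', _⟩
      · exact posR_neg_elim hpx hpx'
      · exact hx (by simpa using hx')
    · subst hx
      rcases h' with ⟨hx', _⟩ | ⟨_, hl'⟩
      · exact hx' (by simp)
      · exact posL_not_neg hl hl'

theorem posL_tri : ∀ {l : List (MonoidAlgebra ℤ Γ)}, (∃ x ∈ l, x ≠ 0) →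
    posL l ∨ posL (l.map Neg.neg)
  | [], h => by simpa using h
  | x :: l, h => by
    by_cases hx : x = 0
    · subst hx
      have : ∃ y ∈ l, y ≠ 0 := by
        obtain ⟨y, hy, hy'⟩ := h
        rcases List.mem_cons.1 hy with rfl | hy
        · exact absurd rfl hy'
        · exact ⟨y, hy, hy'⟩
      rcases posL_tri this with h' | h'
      · exact Or.inl (Or.inr ⟨rfl, h'⟩)
      · exact Or.inr (Or.inr ⟨by simp, h'⟩)
    · rcases posR_tri hx with h' | h'
      · exact Or.inl (Or.inl ⟨hx, h'⟩)
      · exact Or.inr (Or.inl ⟨by simpa using hx, h'⟩)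

theorem posL_mono : ∀ {l l' : List (MonoidAlgebra ℤ Γ)},
    List.Forall₂ (fun x y => (x = 0 ↔ y = 0) ∧ (posR x → posR y)) l l' → posL l → posL l'
  | [], [], _, h => h.elim
  | x :: l, y :: l', hf, h => by
    rcases hf with _ | ⟨⟨hiff, hpos⟩, hf⟩
    rcases h with ⟨hx, hpx⟩ | ⟨hx, hl⟩
    · exact Or.inl ⟨fun h0 => hx (hiff.2 h0), hpos hpx⟩
    · exact Or.inr ⟨hiff.1 hx, posL_mono hf hl⟩

/-! ### Matrices of polynomials over the group ring -/

noncomputable def cM (M : Matrix (Fin 2) (Fin 2) (Polynomial (MonoidAlgebra ℤ Γ))) (n : ℕ) :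
    Matrix (Fin 2) (Fin 2) (MonoidAlgebra ℤ Γ) :=
  Matrix.of fun i j => (M i j).coeff n

def ents (N : Matrix (Fin 2) (Fin 2) (MonoidAlgebra ℤ Γ)) : List (MonoidAlgebra ℤ Γ) :=
  [N 0 0, N 0 1, N 1 0, N 1 1]

theorem eq_zero_of_ents {N : Matrix (Fin 2) (Fin 2) (MonoidAlgebra ℤ Γ)}
    (h : ∀ x ∈ ents N, x = 0) : N = 0 := by
  refine Matrix.ext fun i j => ?_
  rw [Matrix.zero_apply]
  fin_cases i <;> fin_cases j <;> exact h _ (by simp [ents])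

theorem ents_exists_ne {N : Matrix (Fin 2) (Fin 2) (MonoidAlgebra ℤ Γ)} (h : N ≠ 0) :
    ∃ x ∈ ents N, x ≠ 0 := by
  by_contra hc
  push_neg at hc
  exact h (eq_zero_of_ents fun x hx => by simpa using hc x hx)

theorem cM_zero (n : ℕ) : cM (0 : Matrix (Fin 2) (Fin 2) (Polynomial (MonoidAlgebra ℤ Γ))) n = 0 := by
  ext i j; simp [cM]

theorem cM_add (M M' : Matrix (Fin 2) (Fin 2) (Polynomial (MonoidAlgebra ℤ Γ))) (n : ℕ) :
    cM (M + M') n = cM M n + cM M' n := by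
  ext i j; simp [cM]

theorem cM_neg (M : Matrix (Fin 2) (Fin 2) (Polynomial (MonoidAlgebra ℤ Γ))) (n : ℕ) :
    cM (-M) n = -(cM M n) := by
  ext i j; simp [cM]

theorem cM_mul (M N : Matrix (Fin 2) (Fin 2) (Polynomial (MonoidAlgebra ℤ Γ))) (n : ℕ) :
    cM (M * N) n = ∑ x ∈ Finset.HasAntidiagonal.antidiagonal n, cM M x.1 * cM N x.2 := by
  ext i j
  simp only [cM, Matrix.of_apply, Matrix.mul_apply, Matrix.sum_apply]
  rw [Polynomial.finset_sum_coeff]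
  simp only [Polynomial.coeff_mul]
  rw [Finset.sum_comm]

theorem ents_add (N N' : Matrix (Fin 2) (Fin 2) (MonoidAlgebra ℤ Γ)) :
    ents (N + N') = List.zipWith (· + ·) (ents N) (ents N') := by
  simp [ents]

theorem ents_neg (N : Matrix (Fin 2) (Fin 2) (MonoidAlgebra ℤ Γ)) :
    ents (-N) = (ents N).map Neg.neg := by
  simp [ents]

def PosM (M : Matrix (Fin 2) (Fin 2) (Polynomial (MonoidAlgebra ℤ Γ))) : Prop :=
  ∃ h : (∃ n, cM M n ≠ 0), posL (ents (cM M (Nat.find h)))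

theorem PosM_of {M : Matrix (Fin 2) (Fin 2) (Polynomial (MonoidAlgebra ℤ Γ))} (n : ℕ)
    (hlow : ∀ k < n, cM M k = 0) (hp : posL (ents (cM M n))) : PosM M := by
  have hne : cM M n ≠ 0 := by
    intro h0
    obtain ⟨x, hx, hx'⟩ := posL_exists_ne hp
    rw [h0] at hx
    exact hx' (by simpa [ents] using (by simpa [ents, Matrix.zero_apply] using hx : _))
  have hex : ∃ k, cM M k ≠ 0 := ⟨n, hne⟩
  have hfind : Nat.find hex = n := by
    rw [Nat.find_eq_iff]
    exact ⟨hne, fun m hm => not_not_intro (hlow m hm)⟩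
  exact ⟨hex, hfind ▸ hp⟩

theorem not_PosM_zero : ¬ PosM (0 : Matrix (Fin 2) (Fin 2) (Polynomial (MonoidAlgebra ℤ Γ))) := by
  rintro ⟨⟨n, hn⟩, -⟩
  exact hn (cM_zero n)

theorem PosM_low {M : Matrix (Fin 2) (Fin 2) (Polynomial (MonoidAlgebra ℤ Γ))}
    (hex : ∃ n, cM M n ≠ 0) {k : ℕ} (hk : k < Nat.find hex) : cM M k = 0 :=
  not_not.1 (Nat.find_min hex hk)

theorem PosM_add {M M' : Matrix (Fin 2) (Fin 2) (Polynomial (MonoidAlgebra ℤ Γ))}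
    (h : PosM M) (h' : PosM M') : PosM (M + M') := by
  have key : ∀ (A B : Matrix (Fin 2) (Fin 2) (Polynomial (MonoidAlgebra ℤ Γ)))
      (hA : PosM A) (hB : PosM B), Nat.find hA.1 ≤ Nat.find hB.1 → PosM (A + B) := by
    rintro A B ⟨hexA, hpA⟩ ⟨hexB, hpB⟩ hle
    set n := Nat.find hexA with hn
    rcases eq_or_lt_of_le hle with heq | hlt
    · refine PosM_of n ?_ ?_
      · intro k hk
        rw [cM_add, PosM_low hexA hk, PosM_low hexB (heq ▸ hk), add_zero]
      · rw [cM_add, ents_add]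
        exact posL_add hpA (by rw [heq]; exact hpB)
    · refine PosM_of n ?_ ?_
      · intro k hk
        rw [cM_add, PosM_low hexA hk, PosM_low hexB (lt_trans hk hlt), add_zero]
      · rw [cM_add, PosM_low hexB hlt, add_zero]
        exact hpA
  rcases le_total (Nat.find h.1) (Nat.find h'.1) with hle | hle
  · exact key M M' h h' hle
  · rw [add_comm]
    exact key M' M h' h hle

theorem ne_zero_of_PosM {M : Matrix (Fin 2) (Fin 2) (Polynomial (MonoidAlgebra ℤ Γ))}
    (h : PosM M) : M ≠ 0 := by
  rintro rfl
  exact not_PosM_zero h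

theorem exists_cM_ne {M : Matrix (Fin 2) (Fin 2) (Polynomial (MonoidAlgebra ℤ Γ))}
    (h : M ≠ 0) : ∃ n, cM M n ≠ 0 := by
  by_contra hc
  push_neg at hc
  refine h ?_
  refine Matrix.ext fun i j => ?_
  rw [Matrix.zero_apply]
  refine Polynomial.ext fun n => ?_
  rw [Polynomial.coeff_zero]
  have := hc n
  have := congrFun (congrFun this i) j
  simpa [cM] using this

theorem PosM_neg_find {M : Matrix (Fin 2) (Fin 2) (Polynomial (MonoidAlgebra ℤ Γ))}
    (hex : ∃ n, cM M n ≠ 0) :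
    ∃ hex' : (∃ n, cM (-M) n ≠ 0), Nat.find hex' = Nat.find hex := by
  have hex' : ∃ n, cM (-M) n ≠ 0 := by
    obtain ⟨n, hn⟩ := hex
    exact ⟨n, by rw [cM_neg]; simpa using hn⟩
  refine ⟨hex', ?_⟩
  rw [Nat.find_eq_iff]
  constructor
  · rw [cM_neg]
    simpa using Nat.find_spec hex
  · intro m hm
    rw [not_not, cM_neg, PosM_low hex hm, neg_zero]

theorem PosM_tri {M : Matrix (Fin 2) (Fin 2) (Polynomial (MonoidAlgebra ℤ Γ))}
    (h : M ≠ 0) : PosM M ∨ PosM (-M) := by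
  have hex := exists_cM_ne h
  set n := Nat.find hex with hn
  have hspec : cM M n ≠ 0 := Nat.find_spec hex
  obtain ⟨hex', hfind'⟩ := PosM_neg_find hex
  rcases posL_tri (ents_exists_ne hspec) with hp | hp
  · exact Or.inl ⟨hex, hp⟩
  · right
    refine ⟨hex', ?_⟩
    rw [hfind', ← hn, cM_neg, ents_neg]
    exact hp

theorem PosM_asymm {M : Matrix (Fin 2) (Fin 2) (Polynomial (MonoidAlgebra ℤ Γ))}
    (h : PosM M) (h' : PosM (-M)) : False := by
  obtain ⟨hex, hp⟩ := h
  obtain ⟨hex', hp'⟩ := h'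
  obtain ⟨hex'', hfind⟩ := PosM_neg_find hex
  have : hex'' = hex' := rfl
  rw [this] at hfind
  rw [hfind, cM_neg, ents_neg] at hp'
  exact posL_not_neg hp hp'

/-! ### The diagonal matrices and multiplication -/

noncomputable def Dm (u : Γ) : Matrix (Fin 2) (Fin 2) (MonoidAlgebra ℤ Γ) :=
  !![MonoidAlgebra.single u 1, 0; 0, 1]

theorem ents_Dm_mul (u : Γ) (N : Matrix (Fin 2) (Fin 2) (MonoidAlgebra ℤ Γ)) :
    ents (Dm u * N) = [MonoidAlgebra.single u 1 * N 0 0, MonoidAlgebra.single u 1 * N 0 1,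
      N 1 0, N 1 1] := by
  simp [ents, Dm, Matrix.mul_apply, Fin.sum_univ_two]

theorem ents_mul_Dm (u : Γ) (N : Matrix (Fin 2) (Fin 2) (MonoidAlgebra ℤ Γ)) :
    ents (N * Dm u) = [N 0 0 * MonoidAlgebra.single u 1, N 0 1,
      N 1 0 * MonoidAlgebra.single u 1, N 1 1] := by
  simp [ents, Dm, Matrix.mul_apply, Fin.sum_univ_two]

section Cov2

variable (hc : ∀ a b c : Γ, a < b → a * c < b * c) (hc' : ∀ a b c : Γ, a < b → c * a < c * b)

include hc hc'

theorem posL_Dm_mul (u : Γ) {N : Matrix (Fin 2) (Fin 2) (MonoidAlgebra ℤ Γ)}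
    (h : posL (ents N)) : posL (ents (Dm u * N)) := by
  rw [ents_Dm_mul]
  refine posL_mono ?_ h
  refine List.Forall₂.cons ?_ (List.Forall₂.cons ?_ (List.Forall₂.cons ?_
    (List.Forall₂.cons ?_ List.Forall₂.nil)))
  · exact ⟨⟨fun h0 => by rw [h0, mul_zero], (single_mul_eq_zero_iff u _).1⟩,
      fun hp => posR_mul hc hc' (posR_single u) hp⟩
  · exact ⟨⟨fun h0 => by rw [h0, mul_zero], (single_mul_eq_zero_iff u _).1⟩,
      fun hp => posR_mul hc hc' (posR_single u) hp⟩
  · exact ⟨Iff.rfl, id⟩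
  · exact ⟨Iff.rfl, id⟩

theorem posL_mul_Dm (u : Γ) {N : Matrix (Fin 2) (Fin 2) (MonoidAlgebra ℤ Γ)}
    (h : posL (ents N)) : posL (ents (N * Dm u)) := by
  rw [ents_mul_Dm]
  refine posL_mono ?_ h
  refine List.Forall₂.cons ?_ (List.Forall₂.cons ?_ (List.Forall₂.cons ?_
    (List.Forall₂.cons ?_ List.Forall₂.nil)))
  · exact ⟨⟨fun h0 => by rw [h0, zero_mul], (mul_single_eq_zero_iff u _).1⟩,
      fun hp => posR_mul hc hc' hp (posR_single u)⟩
  · exact ⟨Iff.rfl, id⟩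
  · exact ⟨⟨fun h0 => by rw [h0, zero_mul], (mul_single_eq_zero_iff u _).1⟩,
      fun hp => posR_mul hc hc' hp (posR_single u)⟩
  · exact ⟨Iff.rfl, id⟩

theorem PosM_mul_left {U M : Matrix (Fin 2) (Fin 2) (Polynomial (MonoidAlgebra ℤ Γ))} {u : Γ}
    (hU : cM U 0 = Dm u) (h : PosM M) : PosM (U * M) := by
  obtain ⟨hex, hp⟩ := h
  set n := Nat.find hex with hn
  refine PosM_of n ?_ ?_
  · intro k hk
    rw [cM_mul]
    refine Finset.sum_eq_zero fun x hx => ?_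
    have hx2 : x.2 < n := lt_of_le_of_lt (by
      have := Finset.HasAntidiagonal.mem_antidiagonal.1 hx
      omega) hk
    rw [PosM_low hex hx2, mul_zero]
  · have : cM (U * M) n = Dm u * cM M n := by
      rw [cM_mul]
      rw [Finset.sum_eq_single (0, n)]
      · rw [hU]
      · intro x hx hxne
        have hmem := Finset.HasAntidiagonal.mem_antidiagonal.1 hx
        have hx2 : x.2 < n := by
          rcases Nat.lt_or_ge x.2 n with h' | h'
          · exact h'
          · exfalso
            apply hxne
            have : x.2 = n := le_antisymm (by omega) h'
            have : x.1 = 0 := by omega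
            exact Prod.ext this (by omega)
        rw [PosM_low hex hx2, mul_zero]
      · intro hmem
        exfalso
        exact hmem (Finset.HasAntidiagonal.mem_antidiagonal.2 (by simp))
    rw [this]
    exact posL_Dm_mul hc hc' u hp

theorem PosM_mul_right {U M : Matrix (Fin 2) (Fin 2) (Polynomial (MonoidAlgebra ℤ Γ))} {u : Γ}
    (hU : cM U 0 = Dm u) (h : PosM M) : PosM (M * U) := by
  obtain ⟨hex, hp⟩ := h
  set n := Nat.find hex with hn
  refine PosM_of n ?_ ?_
  · intro k hk
    rw [cM_mul]
    refine Finset.sum_eq_zero fun x hx => ?_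
    have hx1 : x.1 < n := lt_of_le_of_lt (by
      have := Finset.HasAntidiagonal.mem_antidiagonal.1 hx
      omega) hk
    rw [PosM_low hex hx1, zero_mul]
  · have : cM (M * U) n = cM M n * Dm u := by
      rw [cM_mul]
      rw [Finset.sum_eq_single (n, 0)]
      · rw [hU]
      · intro x hx hxne
        have hmem := Finset.HasAntidiagonal.mem_antidiagonal.1 hx
        have hx1 : x.1 < n := by
          rcases Nat.lt_or_ge x.1 n with h' | h'
          · exact h'
          · exfalso
            apply hxne
            have h1 : x.1 = n := le_antisymm (by omega) h'
            exact Prod.ext h1 (by omega)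
        rw [PosM_low hex hx1, zero_mul]
      · intro hmem
        exfalso
        exact hmem (Finset.HasAntidiagonal.mem_antidiagonal.2 (by simp))
    rw [this]
    exact posL_mul_Dm hc hc' u hp

end Cov2

end VinAux

namespace VinAux

open MonoidAlgebra Polynomial

section Rep

variable {Γ : Type*} [Group Γ] [LinearOrder Γ]
variable {F G : Type*} [Group F] [Group G]

noncomputable def rmatF (f : F →* Γ) :
    F →* Matrix (Fin 2) (Fin 2) (Polynomial (MonoidAlgebra ℤ Γ)) where
  toFun a := !![Polynomial.C (MonoidAlgebra.single (f a) 1), 0;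
      Polynomial.C (MonoidAlgebra.single (f a) 1 - 1) * Polynomial.X, 1]
  map_one' := by
    show !![Polynomial.C (MonoidAlgebra.single (f 1) 1), 0;
      Polynomial.C (MonoidAlgebra.single (f 1) 1 - 1) * Polynomial.X, 1] = 1
    have h1 : MonoidAlgebra.single (f 1) (1 : ℤ) = 1 := by rw [map_one, MonoidAlgebra.one_def]
    rw [h1, Matrix.one_fin_two]
    simp
  map_mul' a b := by
    show !![Polynomial.C (MonoidAlgebra.single (f (a * b)) 1), 0;
      Polynomial.C (MonoidAlgebra.single (f (a * b)) 1 - 1) * Polynomial.X, 1] =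
      !![Polynomial.C (MonoidAlgebra.single (f a) 1), 0;
      Polynomial.C (MonoidAlgebra.single (f a) 1 - 1) * Polynomial.X, 1] *
      !![Polynomial.C (MonoidAlgebra.single (f b) 1), 0;
      Polynomial.C (MonoidAlgebra.single (f b) 1 - 1) * Polynomial.X, 1]
    have hsm : MonoidAlgebra.single (f (a * b)) (1 : ℤ) =
        MonoidAlgebra.single (f a) 1 * MonoidAlgebra.single (f b) 1 := by
      rw [MonoidAlgebra.single_mul_single, map_mul, one_mul]
    rw [Matrix.mul_fin_two]
    have hC : (Polynomial.C (MonoidAlgebra.single (f a * f b) (1:ℤ)) :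
        Polynomial (MonoidAlgebra ℤ Γ)) =
        Polynomial.C (MonoidAlgebra.single (f a) 1) * Polynomial.C (MonoidAlgebra.single (f b) 1) := by
      rw [← Polynomial.C_mul, MonoidAlgebra.single_mul_single, one_mul]
    refine Matrix.ext fun i j => ?_
    fin_cases i <;> fin_cases j <;> simp [hsm]
    · exact hC
    · rw [hC, mul_assoc, Polynomial.X_mul_C, ← mul_assoc, ← add_mul]
      congr 1
      rw [sub_mul, one_mul, sub_add_sub_cancel]


@[simp] theorem rmatF_apply (f : F →* Γ) (a : F) :
    rmatF f a = !![Polynomial.C (MonoidAlgebra.single (f a) 1), 0;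
      Polynomial.C (MonoidAlgebra.single (f a) 1 - 1) * Polynomial.X, 1] := rfl

noncomputable def rmatG (g : G →* Γ) :
    G →* Matrix (Fin 2) (Fin 2) (Polynomial (MonoidAlgebra ℤ Γ)) where
  toFun b := !![Polynomial.C (MonoidAlgebra.single (g b) 1),
      Polynomial.C (MonoidAlgebra.single (g b) 1 - 1) * Polynomial.X; 0, 1]
  map_one' := by
    show !![Polynomial.C (MonoidAlgebra.single (g 1) 1),
      Polynomial.C (MonoidAlgebra.single (g 1) 1 - 1) * Polynomial.X; 0, 1] = 1
    have h1 : MonoidAlgebra.single (g 1) (1 : ℤ) = 1 := by rw [map_one, MonoidAlgebra.one_def]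
    rw [h1, Matrix.one_fin_two]
    simp
  map_mul' a b := by
    show !![Polynomial.C (MonoidAlgebra.single (g (a * b)) 1),
      Polynomial.C (MonoidAlgebra.single (g (a * b)) 1 - 1) * Polynomial.X; 0, 1] =
      !![Polynomial.C (MonoidAlgebra.single (g a) 1),
      Polynomial.C (MonoidAlgebra.single (g a) 1 - 1) * Polynomial.X; 0, 1] *
      !![Polynomial.C (MonoidAlgebra.single (g b) 1),
      Polynomial.C (MonoidAlgebra.single (g b) 1 - 1) * Polynomial.X; 0, 1]
    have hsm : MonoidAlgebra.single (g (a * b)) (1 : ℤ) =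
        MonoidAlgebra.single (g a) 1 * MonoidAlgebra.single (g b) 1 := by
      rw [MonoidAlgebra.single_mul_single, map_mul, one_mul]
    rw [Matrix.mul_fin_two]
    have hC : (Polynomial.C (MonoidAlgebra.single (g a * g b) (1:ℤ)) :
        Polynomial (MonoidAlgebra ℤ Γ)) =
        Polynomial.C (MonoidAlgebra.single (g a) 1) * Polynomial.C (MonoidAlgebra.single (g b) 1) := by
      rw [← Polynomial.C_mul, MonoidAlgebra.single_mul_single, one_mul]
    refine Matrix.ext fun i j => ?_
    fin_cases i <;> fin_cases j <;> simp [hsm]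
    · exact hC
    · rw [hC, ← mul_assoc, ← add_mul]
      congr 1
      rw [mul_sub, mul_one, sub_add_sub_cancel]

@[simp] theorem rmatG_apply (g : G →* Γ) (b : G) :
    rmatG g b = !![Polynomial.C (MonoidAlgebra.single (g b) 1),
      Polynomial.C (MonoidAlgebra.single (g b) 1 - 1) * Polynomial.X; 0, 1] := rfl

theorem cM_rmatF_zero (f : F →* Γ) (a : F) : cM (rmatF f a) 0 = Dm (f a) := by
  refine Matrix.ext fun i j => ?_
  fin_cases i <;> fin_cases j <;>
    simp [cM, Dm, Polynomial.coeff_C_mul]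

theorem cM_rmatG_zero (g : G →* Γ) (b : G) : cM (rmatG g b) 0 = Dm (g b) := by
  refine Matrix.ext fun i j => ?_
  fin_cases i <;> fin_cases j <;>
    simp [cM, Dm, Polynomial.coeff_C_mul]

theorem cM_rmatF_one (f : F →* Γ) (a : F) :
    cM (rmatF f a) 1 = Matrix.single 1 0 (MonoidAlgebra.single (f a) 1 - 1) := by
  refine Matrix.ext fun i j => ?_
  fin_cases i <;> fin_cases j <;>
    simp [cM, Matrix.single, Polynomial.coeff_C_mul, Polynomial.coeff_one,
      Polynomial.coeff_C]

theorem cM_rmatG_one (g : G →* Γ) (b : G) :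
    cM (rmatG g b) 1 = Matrix.single 0 1 (MonoidAlgebra.single (g b) 1 - 1) := by
  refine Matrix.ext fun i j => ?_
  fin_cases i <;> fin_cases j <;>
    simp [cM, Matrix.single, Polynomial.coeff_C_mul, Polynomial.coeff_one,
      Polynomial.coeff_C]

theorem cM_rmatF_big (f : F →* Γ) (a : F) {n : ℕ} (hn : 1 < n) : cM (rmatF f a) n = 0 := by
  have h0 : n ≠ 0 := by omega
  have h1 : (1 : ℕ) ≠ n := by omega
  refine Matrix.ext fun i j => ?_
  fin_cases i <;> fin_cases j <;>
    simp [cM, sub_mul, Polynomial.coeff_sub, Polynomial.coeff_C_mul, Polynomial.coeff_one,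
      Polynomial.coeff_C, Polynomial.coeff_X, h0, h1]

theorem cM_rmatG_big (g : G →* Γ) (b : G) {n : ℕ} (hn : 1 < n) : cM (rmatG g b) n = 0 := by
  have h0 : n ≠ 0 := by omega
  have h1 : (1 : ℕ) ≠ n := by omega
  refine Matrix.ext fun i j => ?_
  fin_cases i <;> fin_cases j <;>
    simp [cM, sub_mul, Polynomial.coeff_sub, Polynomial.coeff_C_mul, Polynomial.coeff_one,
      Polynomial.coeff_C, Polynomial.coeff_X, h0, h1]

/-! ### Words -/

def lett : (F ⊕ G) → Monoid.Coprod F G := Sum.elim Monoid.Coprod.inl Monoid.Coprod.inr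

noncomputable def rml (f : F →* Γ) (g : G →* Γ) :
    (F ⊕ G) → Matrix (Fin 2) (Fin 2) (Polynomial (MonoidAlgebra ℤ Γ)) :=
  Sum.elim (rmatF f) (rmatG g)

def prodl (l : List (F ⊕ G)) : Monoid.Coprod F G := (l.map lett).prod

noncomputable def prodM (f : F →* Γ) (g : G →* Γ) (l : List (F ⊕ G)) :
    Matrix (Fin 2) (Fin 2) (Polynomial (MonoidAlgebra ℤ Γ)) := (l.map (rml f g)).prod

def isOne : (F ⊕ G) → Prop := Sum.elim (· = 1) (· = 1)

def cmb : (F ⊕ G) → (F ⊕ G) → (F ⊕ G)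
  | .inl a, .inl b => .inl (a * b)
  | .inl a, .inr _ => .inl a
  | .inr a, .inl _ => .inr a
  | .inr a, .inr b => .inr (a * b)

def sd : (F ⊕ G) → Bool := Sum.isLeft

def isRed (l : List (F ⊕ G)) : Prop :=
  l.IsChain (fun a b => sd a ≠ sd b) ∧ ∀ x ∈ l, ¬ isOne x

noncomputable def stp (x : F ⊕ G) (r : List (F ⊕ G)) : List (F ⊕ G) :=
  match r with
  | [] => if isOne x then [] else [x]
  | y :: r' =>
    if sd x = sd y then (if isOne (cmb x y) then r' else cmb x y :: r')
    else (if isOne x then y :: r' else x :: y :: r')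

noncomputable def red : List (F ⊕ G) → List (F ⊕ G)
  | [] => []
  | x :: l => stp x (red l)

theorem lett_one {x : F ⊕ G} (h : isOne x) : lett x = 1 := by
  cases x with
  | inl a => rw [show a = 1 from h]; simp [lett]
  | inr b => rw [show b = 1 from h]; simp [lett]

theorem lett_cmb {x y : F ⊕ G} (h : sd x = sd y) : lett (cmb x y) = lett x * lett y := by
  cases x <;> cases y <;> simp [sd] at h ⊢ <;> simp [cmb, lett, map_mul]

theorem sd_cmb {x y : F ⊕ G} (h : sd x = sd y) : sd (cmb x y) = sd x := by
  cases x <;> cases y <;> simp [sd] at h ⊢ <;> simp [cmb, sd]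

theorem prodl_nil : prodl ([] : List (F ⊕ G)) = 1 := rfl

theorem prodl_cons (x : F ⊕ G) (l : List (F ⊕ G)) : prodl (x :: l) = lett x * prodl l := by
  simp [prodl]

theorem prodl_stp (x : F ⊕ G) (r : List (F ⊕ G)) : prodl (stp x r) = lett x * prodl r := by
  cases r with
  | nil =>
    by_cases h : isOne x
    · simp [stp, h, prodl_nil, lett_one h]
    · simp [stp, h, prodl_cons, prodl_nil]
  | cons y r' =>
    by_cases hs : sd x = sd y
    · by_cases h1 : isOne (cmb x y)
      · have : lett x * lett y = 1 := by rw [← lett_cmb hs, lett_one h1]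
        simp [stp, hs, h1, prodl_cons, ← mul_assoc, this]
      · simp [stp, hs, h1, prodl_cons, lett_cmb hs, mul_assoc]
    · by_cases h1 : isOne x
      · simp [stp, hs, h1, prodl_cons, lett_one h1]
      · simp [stp, hs, h1, prodl_cons]

theorem prodl_red (l : List (F ⊕ G)) : prodl (red l) = prodl l := by
  induction l with
  | nil => rfl
  | cons x l ih => rw [red, prodl_stp, ih, prodl_cons]

theorem isRed_stp (x : F ⊕ G) (r : List (F ⊕ G)) (hr : isRed r) : isRed (stp x r) := by
  obtain ⟨hch, hm⟩ := hr
  cases r with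
  | nil =>
    by_cases h : isOne x
    · simp [stp, h, isRed]
    · refine ⟨?_, ?_⟩
      · simp [stp, h]
      · intro y hy
        simp [stp, h] at hy
        rw [hy]
        exact h
  | cons y r' =>
    rw [List.isChain_cons] at hch
    obtain ⟨hhd, hch'⟩ := hch
    by_cases hs : sd x = sd y
    · by_cases h1 : isOne (cmb x y)
      · refine ⟨?_, ?_⟩
        · simp [stp, hs, h1, hch']
        · intro z hz
          simp [stp, hs, h1] at hz
          exact hm z (List.mem_cons_of_mem _ hz)
      · refine ⟨?_, ?_⟩
        · simp only [stp]
          rw [if_pos hs, if_neg h1]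
          rw [List.isChain_cons]
          refine ⟨?_, hch'⟩
          intro z hz
          rw [sd_cmb hs, hs]
          exact hhd z hz
        · intro z hz
          simp only [stp] at hz
          rw [if_pos hs, if_neg h1] at hz
          rcases List.mem_cons.1 hz with rfl | hz
          · exact h1
          · exact hm z (List.mem_cons_of_mem _ hz)
    · by_cases h1 : isOne x
      · refine ⟨?_, ?_⟩
        · simp only [stp]
          rw [if_neg hs, if_pos h1]
          rw [List.isChain_cons]
          exact ⟨hhd, hch'⟩
        · intro z hz
          simp only [stp] at hz
          rw [if_neg hs, if_pos h1] at hz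
          exact hm z hz
      · refine ⟨?_, ?_⟩
        · simp only [stp]
          rw [if_neg hs, if_neg h1]
          rw [List.isChain_cons]
          refine ⟨?_, ?_⟩
          · intro z hz
            simp at hz
            subst hz
            exact hs
          · rw [List.isChain_cons]
            exact ⟨hhd, hch'⟩
        · intro z hz
          simp only [stp] at hz
          rw [if_neg hs, if_neg h1] at hz
          rcases List.mem_cons.1 hz with rfl | hz
          · exact h1
          · exact hm z hz

theorem isRed_red (l : List (F ⊕ G)) : isRed (red l) := by
  induction l with
  | nil => exact ⟨List.isChain_nil, by simp [red]⟩
  | cons x l ih => exact isRed_stp x (red l) ih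

theorem exists_red_word (w : Monoid.Coprod F G) : ∃ l : List (F ⊕ G), isRed l ∧ w = prodl l := by
  induction w using Monoid.Coprod.induction_on' with
  | one => exact ⟨[], ⟨List.isChain_nil, by simp⟩, rfl⟩
  | inl_mul m x ih =>
    obtain ⟨l, _, rfl⟩ := ih
    refine ⟨red (Sum.inl m :: l), isRed_red _, ?_⟩
    rw [prodl_red, prodl_cons]
    rfl
  | inr_mul m x ih =>
    obtain ⟨l, _, rfl⟩ := ih
    refine ⟨red (Sum.inr m :: l), isRed_red _, ?_⟩
    rw [prodl_red, prodl_cons]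
    rfl

end Rep

end VinAux

namespace VinAux

open MonoidAlgebra Polynomial

section Key

variable {Γ : Type*} [Group Γ] [LinearOrder Γ]
variable {F G : Type*} [Group F] [Group G]
variable (f : F →* Γ) (g : G →* Γ)

def vtr (f : F →* Γ) (g : G →* Γ) : (F ⊕ G) → Γ := Sum.elim f g

def rowOf : (F ⊕ G) → Fin 2 := Sum.elim (fun _ => 1) (fun _ => 0)

def colOf : (F ⊕ G) → Fin 2 := Sum.elim (fun _ => 0) (fun _ => 1)

theorem cM_rml_zero (x : F ⊕ G) : cM (rml f g x) 0 = Dm (vtr f g x) := by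
  cases x
  · exact cM_rmatF_zero f _
  · exact cM_rmatG_zero g _

theorem cM_rml_one (x : F ⊕ G) :
    cM (rml f g x) 1 = Matrix.single (rowOf x) (colOf x)
      (MonoidAlgebra.single (vtr f g x) 1 - 1) := by
  cases x
  · exact cM_rmatF_one f _
  · exact cM_rmatG_one g _

theorem cM_rml_big (x : F ⊕ G) {n : ℕ} (hn : 1 < n) : cM (rml f g x) n = 0 := by
  cases x
  · exact cM_rmatF_big f _ hn
  · exact cM_rmatG_big g _ hn

theorem colOf_eq_rowOf {x y : F ⊕ G} (h : sd x ≠ sd y) : colOf x = rowOf y := by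
  cases x <;> cases y <;> simp [sd] at h ⊢ <;> simp [colOf, rowOf]

theorem signed_vtr (hf : ∀ a : F, a ≠ 1 → f a ≠ 1) (hg : ∀ b : G, b ≠ 1 → g b ≠ 1)
    {x : F ⊕ G} (h1 : ¬ isOne x) : signedR (MonoidAlgebra.single (vtr f g x) (1:ℤ) - 1) := by
  cases x with
  | inl a => exact signedR_sub_one (hf a h1)
  | inr b => exact signedR_sub_one (hg b h1)

theorem prodM_cons (x : F ⊕ G) (l : List (F ⊕ G)) :
    prodM f g (x :: l) = rml f g x * prodM f g l := by
  simp [prodM]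

theorem prodM_single (x : F ⊕ G) : prodM f g [x] = rml f g x := by
  simp [prodM]

theorem cM_mul_bound {Γ' : Type*} [Group Γ'] [LinearOrder Γ']
    {A B : Matrix (Fin 2) (Fin 2) (Polynomial (MonoidAlgebra ℤ Γ'))} {m n : ℕ}
    (hA : ∀ q, m < q → cM A q = 0) (hB : ∀ q, n < q → cM B q = 0) :
    ∀ q, m + n < q → cM (A * B) q = 0 := by
  intro q hq
  rw [cM_mul]
  refine Finset.sum_eq_zero fun x hx => ?_
  have hmem := Finset.HasAntidiagonal.mem_antidiagonal.1 hx
  rcases Nat.lt_or_ge m x.1 with h | h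
  · rw [hA x.1 h, zero_mul]
  · rw [hB x.2 (by omega), mul_zero]

section withHyp

variable (hc : ∀ a b c : Γ, a < b → a * c < b * c) (hc' : ∀ a b c : Γ, a < b → c * a < c * b)
variable (hf : ∀ a : F, a ≠ 1 → f a ≠ 1) (hg : ∀ b : G, b ≠ 1 → g b ≠ 1)

include hc hc' hf hg

theorem key : ∀ (l : List (F ⊕ G)) (x : F ⊕ G), isRed (x :: l) →
    (∀ q, (x :: l).length < q → cM (prodM f g (x :: l)) q = 0) ∧
    ∃ (c : Fin 2) (z : MonoidAlgebra ℤ Γ), signedR z ∧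
      cM (prodM f g (x :: l)) (x :: l).length = Matrix.single (rowOf x) c z := by
  intro l
  induction l with
  | nil =>
    intro x hred
    constructor
    · intro q hq
      rw [prodM_single]
      exact cM_rml_big f g x (by simpa using hq)
    · refine ⟨colOf x, MonoidAlgebra.single (vtr f g x) 1 - 1,
        signed_vtr f g hf hg (hred.2 x (List.mem_cons_self)), ?_⟩
      rw [prodM_single]
      simpa using cM_rml_one f g x
  | cons y l' ih =>
    intro x hred
    have hred' : isRed (y :: l') :=
      ⟨hred.1.tail, fun z hz => hred.2 z (List.mem_cons_of_mem _ hz)⟩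
    obtain ⟨hbd, c', z', hz', htop⟩ := ih y hred'
    have hsxy : sd x ≠ sd y := (List.isChain_cons_cons.1 hred.1).1
    have hbdx : ∀ q, 1 < q → cM (rml f g x) q = 0 := fun q hq => cM_rml_big f g x hq
    have hlen : (x :: y :: l').length = (y :: l').length + 1 := by simp
    constructor
    · intro q hq
      rw [prodM_cons]
      refine cM_mul_bound hbdx hbd q ?_
      omega
    · refine ⟨c', (MonoidAlgebra.single (vtr f g x) 1 - 1) * z',
        signedR_mul hc hc' (signed_vtr f g hf hg (hred.2 x (List.mem_cons_self))) hz', ?_⟩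
      rw [prodM_cons, hlen, cM_mul]
      rw [Finset.sum_eq_single (1, (y :: l').length)]
      · rw [cM_rml_one, htop, colOf_eq_rowOf hsxy, Matrix.single_mul_single_same]
      · intro p hp hpne
        have hmem := Finset.HasAntidiagonal.mem_antidiagonal.1 hp
        rcases Nat.lt_or_ge 1 p.1 with h | h
        · rw [cM_rml_big f g x h, zero_mul]
        · have : (y :: l').length < p.2 ∨ p = (1, (y :: l').length) := by
            rcases Nat.lt_or_ge (y :: l').length p.2 with h2 | h2
            · exact Or.inl h2
            · right
              have h1 : p.1 = 1 := by omega
              exact Prod.ext h1 (by omega)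
          rcases this with h2 | h2
          · rw [hbd p.2 h2, mul_zero]
          · exact absurd h2 hpne
      · intro hmem
        exact absurd (Finset.HasAntidiagonal.mem_antidiagonal.2 (by omega)) hmem

theorem lift_eq_one {w : Monoid.Coprod F G}
    (hw : Monoid.Coprod.lift (rmatF f) (rmatG g) w = 1) : w = 1 := by
  by_contra hne
  obtain ⟨l, hl, rfl⟩ := exists_red_word w
  cases l with
  | nil => exact hne prodl_nil
  | cons x l' =>
    obtain ⟨_, c, z, hz, htop⟩ := key f g hc hc' hf hg l' x hl
    have hth : Monoid.Coprod.lift (rmatF f) (rmatG g) (prodl (x :: l')) = prodM f g (x :: l') := by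
      unfold prodl prodM
      rw [MonoidHom.map_list_prod, List.map_map]
      congr 1
      refine List.map_congr_left fun t _ => ?_
      cases t
      · exact Monoid.Coprod.lift_apply_inl _ _ _
      · exact Monoid.Coprod.lift_apply_inr _ _ _
    rw [hw] at hth
    rw [← hth] at htop
    have hzval := congrFun (congrFun htop (rowOf x)) c
    have : z = 0 := by
      rw [Matrix.single, Matrix.of_apply] at hzval
      simp only [and_self, if_true] at hzval
      rw [← hzval]
      show ((1 : Matrix (Fin 2) (Fin 2) (Polynomial (MonoidAlgebra ℤ Γ))) (rowOf x) c).coeff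
        ((x :: l').length) = 0
      rw [Matrix.one_apply]
      by_cases hrc : rowOf x = c
      · rw [if_pos hrc, Polynomial.coeff_one, if_neg (by simp)]
      · rw [if_neg hrc, Polynomial.coeff_zero]
    exact signedR_ne_zero hz this

theorem lift_injective : Function.Injective (Monoid.Coprod.lift (rmatF f) (rmatG g)) := by
  intro a b h
  have h1 : Monoid.Coprod.lift (rmatF f) (rmatG g) (a * b⁻¹) = 1 := by
    rw [map_mul, h, ← map_mul]
    simp
  have := lift_eq_one f g hc hc' hf hg h1
  rwa [mul_inv_eq_one] at this

end withHyp

theorem Dm_mul (u v : Γ) : Dm u * Dm v = Dm (u * v) := by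
  refine Matrix.ext fun i j => ?_
  fin_cases i <;> fin_cases j <;>
    simp [Dm, Matrix.mul_apply, Fin.sum_univ_two, MonoidAlgebra.single_mul_single]

theorem Dm_one : Dm (1 : Γ) = 1 := by
  rw [Dm, ← MonoidAlgebra.one_def, Matrix.one_fin_two]

theorem cM_one_zero : cM (1 : Matrix (Fin 2) (Fin 2) (Polynomial (MonoidAlgebra ℤ Γ))) 0 = 1 := by
  refine Matrix.ext fun i j => ?_
  fin_cases i <;> fin_cases j <;>
    simp [cM, Matrix.one_apply, Polynomial.coeff_one]

theorem cM_mul_zero (A B : Matrix (Fin 2) (Fin 2) (Polynomial (MonoidAlgebra ℤ Γ))) :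
    cM (A * B) 0 = cM A 0 * cM B 0 := by
  rw [cM_mul, Finset.Nat.antidiagonal_zero, Finset.sum_singleton]

theorem cM_theta_zero (w : Monoid.Coprod F G) :
    cM (Monoid.Coprod.lift (rmatF f) (rmatG g) w) 0 = Dm (Monoid.Coprod.lift f g w) := by
  induction w using Monoid.Coprod.induction_on' with
  | one => rw [map_one, map_one, cM_one_zero, Dm_one]
  | inl_mul m x ihx =>
    rw [map_mul, map_mul, cM_mul_zero, ihx, Monoid.Coprod.lift_apply_inl,
      Monoid.Coprod.lift_apply_inl, cM_rmatF_zero, Dm_mul]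
  | inr_mul m x ihx =>
    rw [map_mul, map_mul, cM_mul_zero, ihx, Monoid.Coprod.lift_apply_inr,
      Monoid.Coprod.lift_apply_inr, cM_rmatG_zero, Dm_mul]

theorem main_aux (hc : ∀ a b c : Γ, a < b → a * c < b * c)
    (hc' : ∀ a b c : Γ, a < b → c * a < c * b)
    (hf : ∀ a : F, a ≠ 1 → f a ≠ 1) (hg : ∀ b : G, b ≠ 1 → g b ≠ 1) :
    ∃ lt : Monoid.Coprod F G → Monoid.Coprod F G → Prop,
      (∀ a b, lt a b ∨ a = b ∨ lt b a) ∧ (∀ a, ¬ lt a a) ∧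
      (∀ a b c, lt a b → lt b c → lt a c) ∧
      (∀ x y z, lt x y → lt (x * z) (y * z)) ∧ (∀ x y z, lt x y → lt (z * x) (z * y)) := by
  set θ := Monoid.Coprod.lift (rmatF f) (rmatG g) with hθ
  refine ⟨fun a b => PosM (θ b - θ a), ?_, ?_, ?_, ?_, ?_⟩
  · intro a b
    by_cases hab : a = b
    · exact Or.inr (Or.inl hab)
    · have hne : θ b - θ a ≠ 0 := by
        rw [sub_ne_zero]
        intro h
        exact hab (lift_injective f g hc hc' hf hg h.symm)
      rcases PosM_tri hne with h | h
      · exact Or.inl h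
      · right; right
        rwa [neg_sub] at h
  · intro a h
    exact not_PosM_zero (sub_self (θ a) ▸ h)
  · intro a b c h1 h2
    have := PosM_add h2 h1
    rwa [sub_add_sub_cancel] at this
  · intro x y z h
    have : θ (y * z) - θ (x * z) = (θ y - θ x) * θ z := by
      rw [map_mul, map_mul, sub_mul]
    rw [this]
    exact PosM_mul_right hc hc' (cM_theta_zero f g z) h
  · intro x y z h
    have : θ (z * y) - θ (z * x) = θ z * (θ y - θ x) := by
      rw [map_mul, map_mul, mul_sub]
    rw [this]
    exact PosM_mul_left hc hc' (cM_theta_zero f g z) h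

end Key

end VinAux

/-- A bi-invariant strict total order on a group. -/
def IsBiOrder {G : Type*} [Group G] (lt : G → G → Prop) : Prop :=
  IsStrictTotalOrder G lt ∧ (∀ x y z : G, lt x y → lt (x * z) (y * z)) ∧
    (∀ x y z : G, lt x y → lt (z * x) (z * y))

/-- Vinogradov's theorem (binary case): the free product of orderable groups is orderable. -/
theorem free_product_orderable {F G : Type*} [Group F] [Group G]
    (hF : ∃ ltF : F → F → Prop, IsBiOrder ltF)
    (hG : ∃ ltG : G → G → Prop, IsBiOrder ltG) :
    ∃ lt : Monoid.Coprod F G → Monoid.Coprod F G → Prop, IsBiOrder lt := by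
  classical
  obtain ⟨ltF, hF1, hF2, hF3⟩ := hF
  obtain ⟨ltG, hG1, hG2, hG3⟩ := hG
  haveI := hF1
  haveI := hG1
  set ltP : F × G → F × G → Prop :=
    fun p q => ltF p.1 q.1 ∨ (p.1 = q.1 ∧ ltG p.2 q.2) with hltP
  haveI hSTO : IsStrictTotalOrder (F × G) ltP := by
    refine { trichotomous := ?_, irrefl := ?_, trans := ?_ }
    · intro p q hpq hqp
      rcases trichotomous_of ltF p.1 q.1 with h | h | h
      · exact absurd (Or.inl h) hpq
      · rcases trichotomous_of ltG p.2 q.2 with h2 | h2 | h2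
        · exact absurd (Or.inr ⟨h, h2⟩) hpq
        · exact Prod.ext h h2
        · exact absurd (Or.inr ⟨h.symm, h2⟩) hqp
      · exact absurd (Or.inl h) hqp
    · intro p h
      rcases h with h | ⟨-, h⟩
      · exact irrefl_of ltF p.1 h
      · exact irrefl_of ltG p.2 h
    · intro p q r h1 h2
      rcases h1 with h1 | ⟨e1, h1⟩ <;> rcases h2 with h2 | ⟨e2, h2⟩
      · exact Or.inl (trans_of ltF h1 h2)
      · exact Or.inl (e2 ▸ h1)
      · exact Or.inl (e1 ▸ h2)
      · exact Or.inr ⟨e1.trans e2, trans_of ltG h1 h2⟩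
  letI : DecidableRel ltP := Classical.decRel _
  letI : LinearOrder (F × G) := linearOrderOfSTO ltP
  have hlt_iff : ∀ p q : F × G, p < q ↔ ltP p q := fun p q => Iff.rfl
  have hc : ∀ a b c : F × G, a < b → a * c < b * c := by
    intro a b c h
    rw [hlt_iff] at h ⊢
    rcases h with h | ⟨e, h⟩
    · exact Or.inl (hF2 _ _ c.1 h)
    · exact Or.inr ⟨congrArg (· * c.1) e, hG2 _ _ c.2 h⟩
  have hc' : ∀ a b c : F × G, a < b → c * a < c * b := by
    intro a b c h
    rw [hlt_iff] at h ⊢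
    rcases h with h | ⟨e, h⟩
    · exact Or.inl (hF3 _ _ c.1 h)
    · exact Or.inr ⟨congrArg (c.1 * ·) e, hG3 _ _ c.2 h⟩
  have hf : ∀ a : F, a ≠ 1 → (MonoidHom.inl F G) a ≠ 1 := by
    intro a ha h
    exact ha (congrArg Prod.fst h)
  have hg : ∀ b : G, b ≠ 1 → (MonoidHom.inr F G) b ≠ 1 := by
    intro b hb h
    exact hb (congrArg Prod.snd h)
  obtain ⟨lt, htri, hirr, htrans, hr, hl⟩ :=
    VinAux.main_aux (MonoidHom.inl F G) (MonoidHom.inr F G) hc hc' hf hg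
  refine ⟨lt, ⟨?_, hr, hl⟩⟩
  exact { trichotomous := fun a b h1 h2 => ((htri a b).resolve_left h1).resolve_right h2, irrefl := hirr, trans := htrans }
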